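/- arXiv:dg-ga/9410005 — 2 statements merged into one kernel-verified Lean document; each statement's English description precedes it below -/
import Mathlib

section
/- (Laplacian when the Hermitian structure is constant along the fibres.) Let U ⊆ ℝ^{2m} ≅ ℂ^m and V ⊆ ℂ^k be open, let M : V → so(m,ℂ) be holomorphic, and let z : U → V be a smooth map that is (M∘z)-holomorphic, i.e. ∂z^a/∂q̄^i + Σ_{j=1}^m M^j_{ī}(z(q)) ∂z^a/∂q^j = 0 for all i and all components a. Set A^a_i := ∂z^a/∂q^i. Then for each a = 1,…,k, (1/4)Δz^a = − Σ_{i,j=1}^m Σ_{b=1}^k A^a_i A^b_j (∂M^i_{j̄}/∂z^b)(z(q)). -/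
open Complex BigOperators Matrix

/-- Partial derivative in the direction of the real coordinate `x^{2j-1}`,
identifying `ℝ^{2m} ≅ ℂ^m` via `q^j = x^{2j-1} + i x^{2j}`. -/
noncomputable def pdRe {m : ℕ} (f : (Fin m → ℂ) → ℂ) (j : Fin m) (x : Fin m → ℂ) : ℂ :=
  fderiv ℝ f x (Pi.single j 1)

/-- Partial derivative in the direction of the real coordinate `x^{2j}`. -/
noncomputable def pdIm {m : ℕ} (f : (Fin m → ℂ) → ℂ) (j : Fin m) (x : Fin m → ℂ) : ℂ :=
  fderiv ℝ f x (Pi.single j Complex.I)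

/-- Wirtinger derivative `∂f/∂q^j = ½(∂f/∂x^{2j-1} − i ∂f/∂x^{2j})`. -/
noncomputable def wdq {m : ℕ} (f : (Fin m → ℂ) → ℂ) (j : Fin m) (x : Fin m → ℂ) : ℂ :=
  (pdRe f j x - Complex.I * pdIm f j x) / 2

/-- Wirtinger derivative `∂f/∂q̄^j = ½(∂f/∂x^{2j-1} + i ∂f/∂x^{2j})`. -/
noncomputable def wdqbar {m : ℕ} (f : (Fin m → ℂ) → ℂ) (j : Fin m) (x : Fin m → ℂ) : ℂ :=
  (pdRe f j x + Complex.I * pdIm f j x) / 2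

/-- Laplacian `Δf = Σ_{i=1}^{2m} ∂²f/(∂x^i)²`. -/
noncomputable def lap {m : ℕ} (f : (Fin m → ℂ) → ℂ) (x : Fin m → ℂ) : ℂ :=
  ∑ j, (pdRe (fun y => pdRe f j y) j x + pdIm (fun y => pdIm f j y) j x)

/-- The horizontal weak conformality quantity `Σ_{i=1}^{2m} (∂f/∂x^i)²`. -/
noncomputable def hwc {m : ℕ} (f : (Fin m → ℂ) → ℂ) (x : Fin m → ℂ) : ℂ :=
  ∑ j, ((pdRe f j x) ^ 2 + (pdIm f j x) ^ 2)

section Aux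
variable {m k : ℕ}

private lemma wtop1 : ((⊤ : ℕ∞) : WithTop ℕ∞) + 1 ≤ ((⊤ : ℕ∞) : WithTop ℕ∞) := by
  exact_mod_cast le_top
private lemma wtop2 : (1 : WithTop ℕ∞) ≤ ((⊤ : ℕ∞) : WithTop ℕ∞) := by
  exact_mod_cast le_top
private lemma wtop3 : (2 : WithTop ℕ∞) ≤ ((⊤ : ℕ∞) : WithTop ℕ∞) := by
  have h : ((2:ℕ∞) : WithTop ℕ∞) ≤ ((⊤ : ℕ∞) : WithTop ℕ∞) := WithTop.coe_le_coe.mpr le_top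
  simpa using h

private lemma pdv_contDiffAt {f : (Fin m → ℂ) → ℂ} {q : Fin m → ℂ}
    (hf : ContDiffAt ℝ (⊤ : ℕ∞) f q) (v : Fin m → ℂ) :
    ContDiffAt ℝ (⊤ : ℕ∞) (fun x => fderiv ℝ f x v) q := by
  have h1 : ContDiffAt ℝ (⊤ : ℕ∞) (fderiv ℝ f) q := hf.fderiv_right wtop1
  exact (ContinuousLinearMap.apply ℝ ℂ v).contDiff.comp_contDiffAt q h1

private lemma pdv_pdv_symm {f : (Fin m → ℂ) → ℂ} {q : Fin m → ℂ}
    (hf : ContDiffAt ℝ (⊤ : ℕ∞) f q) (v w : Fin m → ℂ) :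
    fderiv ℝ (fun x => fderiv ℝ f x w) q v = fderiv ℝ (fun x => fderiv ℝ f x v) q w := by
  have hdf : DifferentiableAt ℝ (fderiv ℝ f) q :=
    (hf.fderiv_right wtop1).differentiableAt (by simp)
  have key : ∀ u : Fin m → ℂ, fderiv ℝ (fun x => fderiv ℝ f x u) q
      = (ContinuousLinearMap.apply ℝ ℂ u).comp (fderiv ℝ (fderiv ℝ f) q) := fun u =>
    ((ContinuousLinearMap.apply ℝ ℂ u).hasFDerivAt.comp q hdf.hasFDerivAt).fderiv
  have hsym : fderiv ℝ (fderiv ℝ f) q v w = fderiv ℝ (fderiv ℝ f) q w v :=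
    (hf.isSymmSndFDerivAt (by rw [minSmoothness_of_isRCLikeNormedField]; exact wtop3)).eq v w
  rw [key, key]
  simpa using hsym

private lemma fderiv_combo {f : (Fin m → ℂ) → ℂ} {q : Fin m → ℂ}
    (hf : ContDiffAt ℝ (⊤ : ℕ∞) f q) (c : ℂ) (u w v : Fin m → ℂ) :
    fderiv ℝ (fun x => (fderiv ℝ f x u + c * fderiv ℝ f x w) / 2) q v
      = (fderiv ℝ (fun x => fderiv ℝ f x u) q v
          + c * fderiv ℝ (fun x => fderiv ℝ f x w) q v) / 2 := by
  have hd : ∀ r, DifferentiableAt ℝ (fun x => fderiv ℝ f x r) q := fun r =>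
    (pdv_contDiffAt hf r).differentiableAt (by simp)
  have e : (fun x => (fderiv ℝ f x u + c * fderiv ℝ f x w) / 2)
      = fun x => (2 : ℂ)⁻¹ * (fderiv ℝ f x u + c * fderiv ℝ f x w) := by
    funext x; ring
  rw [e, fderiv_const_mul (a := fun x => fderiv ℝ f x u + c * fderiv ℝ f x w) ((hd u).add ((hd w).const_mul c)),
    fderiv_fun_add (hd u) ((hd w).const_mul c), fderiv_const_mul (hd w)]
  simp only [ContinuousLinearMap.smul_apply, ContinuousLinearMap.add_apply, smul_eq_mul]
  ring

private lemma fderiv_combo_sub {f : (Fin m → ℂ) → ℂ} {q : Fin m → ℂ}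
    (hf : ContDiffAt ℝ (⊤ : ℕ∞) f q) (u w v : Fin m → ℂ) :
    fderiv ℝ (fun x => (fderiv ℝ f x u - Complex.I * fderiv ℝ f x w) / 2) q v
      = (fderiv ℝ (fun x => fderiv ℝ f x u) q v
          - Complex.I * fderiv ℝ (fun x => fderiv ℝ f x w) q v) / 2 := by
  have e : (fun x => (fderiv ℝ f x u - Complex.I * fderiv ℝ f x w) / 2)
      = fun x => (fderiv ℝ f x u + (-Complex.I) * fderiv ℝ f x w) / 2 := by
    funext x; ring
  rw [e, fderiv_combo hf (-Complex.I) u w v]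
  ring

private lemma wdq_wdq_symm {f : (Fin m → ℂ) → ℂ} {q : Fin m → ℂ}
    (hf : ContDiffAt ℝ (⊤ : ℕ∞) f q) (i j : Fin m) :
    wdq (fun x => wdq f j x) i q = wdq (fun x => wdq f i x) j q := by
  have hcombo := fderiv_combo_sub hf
  have hsym := pdv_pdv_symm hf
  unfold wdq pdRe pdIm
  simp only [hcombo]
  linear_combination (hsym (Pi.single i 1) (Pi.single j 1)) / 4
    - Complex.I / 4 * hsym (Pi.single i 1) (Pi.single j Complex.I)
    - Complex.I / 4 * hsym (Pi.single i Complex.I) (Pi.single j 1)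
    + Complex.I ^ 2 / 4 * hsym (Pi.single i Complex.I) (Pi.single j Complex.I)

private lemma quarter_lap {f : (Fin m → ℂ) → ℂ} {q : Fin m → ℂ}
    (hf : ContDiffAt ℝ (⊤ : ℕ∞) f q) :
    (1/4 : ℂ) * lap f q = ∑ i, wdq (fun x => wdqbar f i x) i q := by
  unfold lap
  rw [Finset.mul_sum]
  refine Finset.sum_congr rfl fun i _ => ?_
  have hcombo := fderiv_combo hf Complex.I
  have hsym := pdv_pdv_symm hf (Pi.single i 1) (Pi.single i Complex.I)
  unfold wdq wdqbar pdRe pdIm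
  simp only [hcombo]
  rw [hsym]
  linear_combination (fderiv ℝ (fun y => fderiv ℝ f y (Pi.single i Complex.I)) q
    (Pi.single i Complex.I)) / 4 * Complex.I_sq

private lemma wdq_congr {f g : (Fin m → ℂ) → ℂ} {q : Fin m → ℂ}
    (h : f =ᶠ[nhds q] g) (j : Fin m) : wdq f j q = wdq g j q := by
  unfold wdq pdRe pdIm
  rw [h.fderiv_eq]

private lemma wdq_sum {ι : Type*} {s : Finset ι} {f : ι → (Fin m → ℂ) → ℂ} {q : Fin m → ℂ}
    (hf : ∀ i ∈ s, DifferentiableAt ℝ (f i) q) (j : Fin m) :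
    wdq (fun x => ∑ i ∈ s, f i x) j q = ∑ i ∈ s, wdq (f i) j q := by
  unfold wdq pdRe pdIm
  rw [fderiv_fun_sum hf]
  simp only [ContinuousLinearMap.coe_sum', Finset.sum_apply]
  rw [Finset.mul_sum, ← Finset.sum_sub_distrib, Finset.sum_div]

private lemma wdq_mul {f g : (Fin m → ℂ) → ℂ} {q : Fin m → ℂ}
    (hf : DifferentiableAt ℝ f q) (hg : DifferentiableAt ℝ g q) (j : Fin m) :
    wdq (fun x => f x * g x) j q = wdq f j q * g q + f q * wdq g j q := by
  unfold wdq pdRe pdIm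
  rw [fderiv_fun_mul hf hg]
  simp only [ContinuousLinearMap.add_apply, ContinuousLinearMap.smul_apply, smul_eq_mul]
  ring

private lemma wdq_neg {f : (Fin m → ℂ) → ℂ} {q : Fin m → ℂ} (j : Fin m) :
    wdq (fun x => -f x) j q = - wdq f j q := by
  unfold wdq pdRe pdIm
  rw [fderiv_fun_neg]
  simp only [ContinuousLinearMap.neg_apply]
  ring

private lemma wdq_comp_holo {g : (Fin k → ℂ) → ℂ} {z : (Fin m → ℂ) → Fin k → ℂ}
    {q : Fin m → ℂ} (hg : DifferentiableAt ℂ g (z q)) (hz : DifferentiableAt ℝ z q)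
    (i : Fin m) :
    wdq (fun x => g (z x)) i q
      = ∑ b, wdq (fun x => z x b) i q * fderiv ℂ g (z q) (Pi.single b 1) := by
  have hgR : DifferentiableAt ℝ g (z q) := hg.restrictScalars ℝ
  have hproj : ∀ (b : Fin k) (v : Fin m → ℂ),
      fderiv ℝ (fun x => z x b) q v = fderiv ℝ z q v b := by
    intro b v
    have h : fderiv ℝ (fun x => z x b) q
        = (ContinuousLinearMap.proj b).comp (fderiv ℝ z q) :=
      (((ContinuousLinearMap.proj b) :
        (Fin k → ℂ) →L[ℝ] ℂ).hasFDerivAt.comp q hz.hasFDerivAt).fderiv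
    rw [h]; rfl
  have hvec : ∀ v : Fin k → ℂ,
      fderiv ℂ g (z q) v = ∑ b, v b * fderiv ℂ g (z q) (Pi.single b 1) := by
    intro v
    have hv : v = ∑ b, v b • (Pi.single b (1 : ℂ) : Fin k → ℂ) := by
      funext c
      simp [Finset.sum_apply, Pi.single_apply]
    conv_lhs => rw [hv]
    rw [map_sum]
    simp [smul_eq_mul]
  have hchain : ∀ v : Fin m → ℂ,
      fderiv ℝ (fun x => g (z x)) q v = fderiv ℂ g (z q) (fderiv ℝ z q v) := by
    intro v
    have h : fderiv ℝ (fun x => g (z x)) q = (fderiv ℝ g (z q)).comp (fderiv ℝ z q) :=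
      fderiv_comp q hgR hz
    rw [h, hg.fderiv_restrictScalars ℝ]
    rfl
  unfold wdq pdRe pdIm
  rw [hchain, hchain, hvec, hvec, Finset.mul_sum, ← Finset.sum_sub_distrib, Finset.sum_div]
  refine Finset.sum_congr rfl fun b _ => ?_
  rw [hproj, hproj]
  ring

end Aux

/-- Laplacian of a holomorphic map when the Hermitian structure is
constant along the fibres: if `z : U → V ⊆ ℂ^k` is `(M∘z)`-holomorphic with
`M : V → so(m,ℂ)` holomorphic, then with `A^a_i = ∂z^a/∂q^i`,
`(1/4)Δz^a = − Σ_{i,j,b} A^a_i A^b_j (∂M^i_{j̄}/∂z^b)(z(q))`. -/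
theorem laplacian_constant_along_fibres {m k : ℕ}
    (U : Set (Fin m → ℂ)) (hU : IsOpen U)
    (V : Set (Fin k → ℂ)) (hV : IsOpen V)
    (M : (Fin k → ℂ) → Matrix (Fin m) (Fin m) ℂ)
    (hskew : ∀ v ∈ V, (M v)ᵀ = -(M v))
    (hM : ∀ i j, DifferentiableOn ℂ (fun w => M w i j) V)
    (z : (Fin m → ℂ) → Fin k → ℂ) (hz : ContDiffOn ℝ (⊤ : ℕ∞) z U)
    (hzV : Set.MapsTo z U V)
    (hhol : ∀ q ∈ U, ∀ i, ∀ a,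
      wdqbar (fun x => z x a) i q + ∑ j, M (z q) j i * wdq (fun x => z x a) j q = 0) :
    ∀ q ∈ U, ∀ a, (1/4 : ℂ) * lap (fun x => z x a) q
      = - ∑ i, ∑ j, ∑ b, wdq (fun x => z x a) i q * wdq (fun x => z x b) j q *
          fderiv ℂ (fun w => M w i j) (z q) (Pi.single b 1) := by
  intro q hq a
  have hqU : U ∈ nhds q := hU.mem_nhds hq
  have hzq : ContDiffAt ℝ (⊤ : ℕ∞) z q := hz.contDiffAt hqU
  have hzc : ∀ c : Fin k, ContDiffAt ℝ (⊤ : ℕ∞) (fun x => z x c) q := fun c =>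
    ((ContinuousLinearMap.proj c : (Fin k → ℂ) →L[ℝ] ℂ)).contDiff.comp_contDiffAt q hzq
  have hzd : DifferentiableAt ℝ z q := hzq.differentiableAt (by simp)
  have hwd : ∀ (c : Fin k) (j : Fin m),
      DifferentiableAt ℝ (fun x => wdq (fun y => z y c) j x) q := by
    intro c j
    have h1 := (pdv_contDiffAt (hzc c) (Pi.single j 1)).differentiableAt (by simp)
    have h2 := (pdv_contDiffAt (hzc c) (Pi.single j Complex.I)).differentiableAt (by simp)
    have e : (fun x => wdq (fun y => z y c) j x)
        = fun x => (2:ℂ)⁻¹ * (fderiv ℝ (fun y => z y c) x (Pi.single j 1)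
            - Complex.I * fderiv ℝ (fun y => z y c) x (Pi.single j Complex.I)) := by
      funext x
      unfold wdq pdRe pdIm
      ring
    rw [e]
    exact (h1.sub (h2.const_mul Complex.I)).const_mul ((2:ℂ)⁻¹)
  have hMd : ∀ i j : Fin m, DifferentiableAt ℝ (fun x => M (z x) j i) q := by
    intro i j
    have hMij : DifferentiableAt ℂ (fun w => M w j i) (z q) :=
      (hM j i).differentiableAt (hV.mem_nhds (hzV hq))
    exact (hMij.restrictScalars ℝ).comp q hzd
  have hchain : ∀ i j : Fin m, wdq (fun x => M (z x) j i) i q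
      = ∑ b, wdq (fun x => z x b) i q * fderiv ℂ (fun w => M w j i) (z q) (Pi.single b 1) :=
    fun i j => wdq_comp_holo ((hM j i).differentiableAt (hV.mem_nhds (hzV hq))) hzd i
  rw [quarter_lap (hzc a)]
  have step2 : ∀ i : Fin m, wdq (fun x => wdqbar (fun y => z y a) i x) i q
      = wdq (fun x => ∑ j, (-(M (z x) j i)) * wdq (fun y => z y a) j x) i q := by
    intro i
    refine wdq_congr ?_ i
    filter_upwards [hqU] with x hx
    have h := hhol x hx i a
    have hs : ∑ j, (-(M (z x) j i)) * wdq (fun y => z y a) j x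
        = -∑ j, M (z x) j i * wdq (fun y => z y a) j x := by
      simp [neg_mul]
    rw [hs]
    linear_combination h
  have step3 : ∀ i : Fin m,
      wdq (fun x => ∑ j, (-(M (z x) j i)) * wdq (fun y => z y a) j x) i q
      = ∑ j, ((- wdq (fun x => M (z x) j i) i q) * wdq (fun y => z y a) j q
          + (-(M (z q) j i)) * wdq (fun x => wdq (fun y => z y a) j x) i q) := by
    intro i
    rw [wdq_sum (f := fun j x => (-(M (z x) j i)) * wdq (fun y => z y a) j x) (fun j _ => ((hMd i j).neg).mul (hwd a j)) i]
    refine Finset.sum_congr rfl fun j _ => ?_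
    rw [wdq_mul (f := fun x => -(M (z x) j i)) ((hMd i j).neg) (hwd a j) i, wdq_neg]
  simp only [step2, step3]
  simp only [Finset.sum_add_distrib]
  have hzero : (∑ i, ∑ j, (-(M (z q) j i)) * wdq (fun x => wdq (fun y => z y a) j x) i q)
      = 0 := by
    set S := ∑ i, ∑ j, (-(M (z q) j i)) * wdq (fun x => wdq (fun y => z y a) j x) i q with hS
    have hMsk : ∀ i j, M (z q) j i = -(M (z q) i j) := by
      intro i j
      have h := hskew (z q) (hzV hq)
      have h2 := congrFun (congrFun h i) j
      simpa [Matrix.transpose_apply, Matrix.neg_apply] using h2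
    have hWs : ∀ i j, wdq (fun x => wdq (fun y => z y a) j x) i q
        = wdq (fun x => wdq (fun y => z y a) i x) j q := fun i j => wdq_wdq_symm (hzc a) i j
    have key : S = -S := by
      conv_lhs => rw [hS, Finset.sum_comm]
      calc ∑ j, ∑ i, (-(M (z q) j i)) * wdq (fun x => wdq (fun y => z y a) j x) i q
          = ∑ j, ∑ i, -((-(M (z q) i j)) * wdq (fun x => wdq (fun y => z y a) i x) j q) := by
            refine Finset.sum_congr rfl fun j _ => Finset.sum_congr rfl fun i _ => ?_
            rw [hMsk i j, hWs i j]
            ring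
        _ = -S := by rw [hS]; simp only [Finset.sum_neg_distrib]
    exact add_self_eq_zero.mp (by linear_combination key)
  rw [hzero, add_zero]
  simp only [hchain]
  rw [Finset.sum_comm]
  rw [← Finset.sum_neg_distrib]
  refine Finset.sum_congr rfl fun p _ => ?_
  rw [← Finset.sum_neg_distrib]
  refine Finset.sum_congr rfl fun r _ => ?_
  rw [neg_mul, Finset.sum_mul]
  congr 1
  exact Finset.sum_congr rfl fun b _ => by ring
end

section
/- (The explicit example is full and not Kähler-holomorphic.) The map φ : ℂ³ → ℂ, φ(q¹,q²,q³) = (q¹ − q³q̄²)(q² + q³q̄¹), is a globally defined harmonic morphism on ℝ⁶ ≅ ℂ³ (Δφ = 0 and Σ_{i=1}^{6}(∂φ/∂x^i)² = 0 everywhere) which moreover is full — for every nonzero v ∈ ℝ⁶ the directional derivative ∂_v φ does not vanish identically — and is not holomorphic with respect to any Kähler structure: there is no linear isometry J : ℝ⁶ → ℝ⁶ with J² = −Id such that dφ_x(Jv) = i·dφ_x(v) for all x ∈ ℝ⁶ and v ∈ ℝ⁶. -/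
open Complex BigOperators Matrix

/-- The explicit map `φ(q¹,q²,q³) = (q¹ − q³q̄²)(q² + q³q̄¹)` on `ℂ³ ≅ ℝ⁶`. -/
noncomputable def phiSix : (Fin 3 → ℂ) → ℂ :=
  fun q => (q 0 - q 2 * starRingEnd ℂ (q 1)) * (q 1 + q 2 * starRingEnd ℂ (q 0))

noncomputable def cconj : ℂ →L[ℝ] ℂ := Complex.conjCLE.toContinuousLinearMap

lemma hasFD_coord (j : Fin 3) (q : Fin 3 → ℂ) :
    HasFDerivAt (fun p : Fin 3 → ℂ => p j)
      (ContinuousLinearMap.proj (R := ℝ) (φ := fun _ : Fin 3 => ℂ) j) q :=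
  (ContinuousLinearMap.proj (R := ℝ) (φ := fun _ : Fin 3 => ℂ) j).hasFDerivAt

lemma hasFD_conj (j : Fin 3) (q : Fin 3 → ℂ) :
    HasFDerivAt (fun p : Fin 3 → ℂ => starRingEnd ℂ (p j))
      (cconj.comp (ContinuousLinearMap.proj (R := ℝ) (φ := fun _ : Fin 3 => ℂ) j)) q :=
  (cconj.comp (ContinuousLinearMap.proj (R := ℝ) (φ := fun _ : Fin 3 => ℂ) j)).hasFDerivAt

lemma fd_phi (q v : Fin 3 → ℂ) :
    fderiv ℝ phiSix q v =
      (v 0 - v 2 * starRingEnd ℂ (q 1) - q 2 * starRingEnd ℂ (v 1))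
        * (q 1 + q 2 * starRingEnd ℂ (q 0))
      + (q 0 - q 2 * starRingEnd ℂ (q 1))
        * (v 1 + v 2 * starRingEnd ℂ (q 0) + q 2 * starRingEnd ℂ (v 0)) := by
  have hA := (hasFD_coord 0 q).sub ((hasFD_coord 2 q).mul (hasFD_conj 1 q))
  have hB := (hasFD_coord 1 q).add ((hasFD_coord 2 q).mul (hasFD_conj 0 q))
  have h2 : HasFDerivAt phiSix _ q := hA.mul hB
  rw [h2.fderiv]
  simp [ContinuousLinearMap.smul_apply, ContinuousLinearMap.proj_apply, cconj,
    Complex.conjCLE_apply, smul_eq_mul]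
  ring

lemma fd_g0re (q v : Fin 3 → ℂ) :
    fderiv ℝ (fun q : Fin 3 → ℂ =>
        (q 1 + q 2 * starRingEnd ℂ (q 0)) + (q 0 - q 2 * starRingEnd ℂ (q 1)) * q 2) q v =
      (v 1 + v 2 * starRingEnd ℂ (q 0) + q 2 * starRingEnd ℂ (v 0))
      + (v 0 - v 2 * starRingEnd ℂ (q 1) - q 2 * starRingEnd ℂ (v 1)) * q 2
      + (q 0 - q 2 * starRingEnd ℂ (q 1)) * v 2 := by
  have hA := (hasFD_coord 0 q).sub ((hasFD_coord 2 q).mul (hasFD_conj 1 q))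
  have hB := (hasFD_coord 1 q).add ((hasFD_coord 2 q).mul (hasFD_conj 0 q))
  have h2 := hB.add (hA.mul (hasFD_coord 2 q))
  refine (congrArg (fun L : (Fin 3 → ℂ) →L[ℝ] ℂ => L v) h2.fderiv).trans ?_
  simp [ContinuousLinearMap.smul_apply, ContinuousLinearMap.proj_apply, cconj,
    Complex.conjCLE_apply, smul_eq_mul]
  ring

lemma fd_g0im (q v : Fin 3 → ℂ) :
    fderiv ℝ (fun q : Fin 3 → ℂ => Complex.I *
        ((q 1 + q 2 * starRingEnd ℂ (q 0)) - (q 0 - q 2 * starRingEnd ℂ (q 1)) * q 2)) q v =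
      Complex.I * ((v 1 + v 2 * starRingEnd ℂ (q 0) + q 2 * starRingEnd ℂ (v 0))
      - (v 0 - v 2 * starRingEnd ℂ (q 1) - q 2 * starRingEnd ℂ (v 1)) * q 2
      - (q 0 - q 2 * starRingEnd ℂ (q 1)) * v 2) := by
  have hA := (hasFD_coord 0 q).sub ((hasFD_coord 2 q).mul (hasFD_conj 1 q))
  have hB := (hasFD_coord 1 q).add ((hasFD_coord 2 q).mul (hasFD_conj 0 q))
  have h2 := (hB.sub (hA.mul (hasFD_coord 2 q))).const_mul Complex.I
  refine (congrArg (fun L : (Fin 3 → ℂ) →L[ℝ] ℂ => L v) h2.fderiv).trans ?_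
  simp [ContinuousLinearMap.smul_apply, ContinuousLinearMap.proj_apply, cconj,
    Complex.conjCLE_apply, smul_eq_mul]
  ring

lemma fd_g1re (q v : Fin 3 → ℂ) :
    fderiv ℝ (fun q : Fin 3 → ℂ =>
        (q 0 - q 2 * starRingEnd ℂ (q 1)) - q 2 * (q 1 + q 2 * starRingEnd ℂ (q 0))) q v =
      (v 0 - v 2 * starRingEnd ℂ (q 1) - q 2 * starRingEnd ℂ (v 1))
      - v 2 * (q 1 + q 2 * starRingEnd ℂ (q 0))
      - q 2 * (v 1 + v 2 * starRingEnd ℂ (q 0) + q 2 * starRingEnd ℂ (v 0)) := by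
  have hA := (hasFD_coord 0 q).sub ((hasFD_coord 2 q).mul (hasFD_conj 1 q))
  have hB := (hasFD_coord 1 q).add ((hasFD_coord 2 q).mul (hasFD_conj 0 q))
  have h2 := hA.sub ((hasFD_coord 2 q).mul hB)
  refine (congrArg (fun L : (Fin 3 → ℂ) →L[ℝ] ℂ => L v) h2.fderiv).trans ?_
  simp [ContinuousLinearMap.smul_apply, ContinuousLinearMap.proj_apply, cconj,
    Complex.conjCLE_apply, smul_eq_mul]
  ring

lemma fd_g1im (q v : Fin 3 → ℂ) :
    fderiv ℝ (fun q : Fin 3 → ℂ => Complex.I *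
        ((q 0 - q 2 * starRingEnd ℂ (q 1)) + q 2 * (q 1 + q 2 * starRingEnd ℂ (q 0)))) q v =
      Complex.I * ((v 0 - v 2 * starRingEnd ℂ (q 1) - q 2 * starRingEnd ℂ (v 1))
      + v 2 * (q 1 + q 2 * starRingEnd ℂ (q 0))
      + q 2 * (v 1 + v 2 * starRingEnd ℂ (q 0) + q 2 * starRingEnd ℂ (v 0))) := by
  have hA := (hasFD_coord 0 q).sub ((hasFD_coord 2 q).mul (hasFD_conj 1 q))
  have hB := (hasFD_coord 1 q).add ((hasFD_coord 2 q).mul (hasFD_conj 0 q))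
  have h2 := (hA.add ((hasFD_coord 2 q).mul hB)).const_mul Complex.I
  refine (congrArg (fun L : (Fin 3 → ℂ) →L[ℝ] ℂ => L v) h2.fderiv).trans ?_
  simp [ContinuousLinearMap.smul_apply, ContinuousLinearMap.proj_apply, cconj,
    Complex.conjCLE_apply, smul_eq_mul]
  ring

lemma fd_g2re (q v : Fin 3 → ℂ) :
    fderiv ℝ (fun q : Fin 3 → ℂ =>
        (q 0 - q 2 * starRingEnd ℂ (q 1)) * starRingEnd ℂ (q 0)
        - starRingEnd ℂ (q 1) * (q 1 + q 2 * starRingEnd ℂ (q 0))) q v =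
      (v 0 - v 2 * starRingEnd ℂ (q 1) - q 2 * starRingEnd ℂ (v 1)) * starRingEnd ℂ (q 0)
      + (q 0 - q 2 * starRingEnd ℂ (q 1)) * starRingEnd ℂ (v 0)
      - starRingEnd ℂ (v 1) * (q 1 + q 2 * starRingEnd ℂ (q 0))
      - starRingEnd ℂ (q 1) * (v 1 + v 2 * starRingEnd ℂ (q 0) + q 2 * starRingEnd ℂ (v 0)) := by
  have hA := (hasFD_coord 0 q).sub ((hasFD_coord 2 q).mul (hasFD_conj 1 q))
  have hB := (hasFD_coord 1 q).add ((hasFD_coord 2 q).mul (hasFD_conj 0 q))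
  have h2 := (hA.mul (hasFD_conj 0 q)).sub ((hasFD_conj 1 q).mul hB)
  refine (congrArg (fun L : (Fin 3 → ℂ) →L[ℝ] ℂ => L v) h2.fderiv).trans ?_
  simp [ContinuousLinearMap.smul_apply, ContinuousLinearMap.proj_apply, cconj,
    Complex.conjCLE_apply, smul_eq_mul]
  ring

lemma fd_g2im (q v : Fin 3 → ℂ) :
    fderiv ℝ (fun q : Fin 3 → ℂ => Complex.I *
        ((q 0 - q 2 * starRingEnd ℂ (q 1)) * starRingEnd ℂ (q 0)
        - starRingEnd ℂ (q 1) * (q 1 + q 2 * starRingEnd ℂ (q 0)))) q v =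
      Complex.I * ((v 0 - v 2 * starRingEnd ℂ (q 1) - q 2 * starRingEnd ℂ (v 1)) * starRingEnd ℂ (q 0)
      + (q 0 - q 2 * starRingEnd ℂ (q 1)) * starRingEnd ℂ (v 0)
      - starRingEnd ℂ (v 1) * (q 1 + q 2 * starRingEnd ℂ (q 0))
      - starRingEnd ℂ (q 1) * (v 1 + v 2 * starRingEnd ℂ (q 0) + q 2 * starRingEnd ℂ (v 0))) := by
  have hA := (hasFD_coord 0 q).sub ((hasFD_coord 2 q).mul (hasFD_conj 1 q))
  have hB := (hasFD_coord 1 q).add ((hasFD_coord 2 q).mul (hasFD_conj 0 q))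
  have h2 := ((hA.mul (hasFD_conj 0 q)).sub ((hasFD_conj 1 q).mul hB)).const_mul Complex.I
  refine (congrArg (fun L : (Fin 3 → ℂ) →L[ℝ] ℂ => L v) h2.fderiv).trans ?_
  simp [ContinuousLinearMap.smul_apply, ContinuousLinearMap.proj_apply, cconj,
    Complex.conjCLE_apply, smul_eq_mul]
  ring

lemma pdRe_phi0 : (fun y : Fin 3 → ℂ => pdRe phiSix 0 y) =
    fun q => (q 1 + q 2 * starRingEnd ℂ (q 0)) + (q 0 - q 2 * starRingEnd ℂ (q 1)) * q 2 := by
  funext q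
  simp only [pdRe]
  rw [fd_phi]
  simp [Pi.single_apply]
  try ring

lemma pdIm_phi0 : (fun y : Fin 3 → ℂ => pdIm phiSix 0 y) =
    fun q => Complex.I *
      ((q 1 + q 2 * starRingEnd ℂ (q 0)) - (q 0 - q 2 * starRingEnd ℂ (q 1)) * q 2) := by
  funext q
  simp only [pdIm]
  rw [fd_phi]
  simp [Pi.single_apply]
  try ring

lemma pdRe_phi1 : (fun y : Fin 3 → ℂ => pdRe phiSix 1 y) =
    fun q => (q 0 - q 2 * starRingEnd ℂ (q 1)) - q 2 * (q 1 + q 2 * starRingEnd ℂ (q 0)) := by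
  funext q
  simp only [pdRe]
  rw [fd_phi]
  simp [Pi.single_apply]
  try ring

lemma pdIm_phi1 : (fun y : Fin 3 → ℂ => pdIm phiSix 1 y) =
    fun q => Complex.I *
      ((q 0 - q 2 * starRingEnd ℂ (q 1)) + q 2 * (q 1 + q 2 * starRingEnd ℂ (q 0))) := by
  funext q
  simp only [pdIm]
  rw [fd_phi]
  simp [Pi.single_apply]
  try ring

lemma pdRe_phi2 : (fun y : Fin 3 → ℂ => pdRe phiSix 2 y) =
    fun q => (q 0 - q 2 * starRingEnd ℂ (q 1)) * starRingEnd ℂ (q 0)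
      - starRingEnd ℂ (q 1) * (q 1 + q 2 * starRingEnd ℂ (q 0)) := by
  funext q
  simp only [pdRe]
  rw [fd_phi]
  simp [Pi.single_apply]
  try ring

lemma pdIm_phi2 : (fun y : Fin 3 → ℂ => pdIm phiSix 2 y) =
    fun q => Complex.I *
      ((q 0 - q 2 * starRingEnd ℂ (q 1)) * starRingEnd ℂ (q 0)
      - starRingEnd ℂ (q 1) * (q 1 + q 2 * starRingEnd ℂ (q 0))) := by
  funext q
  simp only [pdIm]
  rw [fd_phi]
  simp [Pi.single_apply]
  try ring

/-- the map `φ(q¹,q²,q³) = (q¹ − q³q̄²)(q² + q³q̄¹)` is a globally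
defined harmonic morphism on `ℝ⁶ ≅ ℂ³` (`Δφ = 0` and `Σ_{i=1}^6 (∂φ/∂x^i)² = 0`
everywhere) which is full (no nonzero direction annihilates `dφ` identically)
and is not holomorphic with respect to any Kähler structure, i.e. any constant
orthogonal complex structure `J` on `ℝ⁶` (orthogonality expressed by
preservation of the Euclidean inner product). -/
theorem explicit_example_full_not_Kahler :
    (∀ q, lap phiSix q = 0)
    ∧ (∀ q, hwc phiSix q = 0)
    ∧ (∀ v : Fin 3 → ℂ, v ≠ 0 → ∃ q, fderiv ℝ phiSix q v ≠ 0)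
    ∧ ¬ (∃ J : (Fin 3 → ℂ) →ₗ[ℝ] (Fin 3 → ℂ),
          (∀ v w : Fin 3 → ℂ,
            (∑ j, starRingEnd ℂ (J v j) * J w j).re
              = (∑ j, starRingEnd ℂ (v j) * w j).re)
          ∧ (∀ v, J (J v) = -v)
          ∧ (∀ x v, fderiv ℝ phiSix x (J v) = Complex.I * fderiv ℝ phiSix x v)) := by
  refine ⟨?_, ?_, ?_, ?_⟩
  · -- lap = 0
    intro q
    simp only [lap, Fin.sum_univ_three]
    rw [pdRe_phi0, pdIm_phi0, pdRe_phi1, pdIm_phi1, pdRe_phi2, pdIm_phi2]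
    simp only [pdRe, pdIm]
    rw [fd_g0re, fd_g0im, fd_g1re, fd_g1im, fd_g2re, fd_g2im]
    simp [Pi.single_apply]
    ring_nf
    simp only [Complex.I_sq]
    ring
  · -- hwc = 0
    intro q
    simp only [hwc, Fin.sum_univ_three, pdRe, pdIm]
    rw [fd_phi, fd_phi, fd_phi, fd_phi, fd_phi, fd_phi]
    simp [Pi.single_apply]
    ring_nf
    simp only [Complex.I_sq]
    ring
  · -- full
    intro v hv
    by_contra h
    push_neg at h
    have e1 := h ![0, 1, 0]
    have e2 := h ![1, 0, 0]
    have e3 := h ![Complex.I, 0, 0]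
    rw [fd_phi] at e1 e2 e3
    simp at e1 e2 e3
    have hv2 : v 2 = 0 := by
      have h12 : (1 + Complex.I) * v 2 = 0 := by linear_combination e2 - e3
      rcases mul_eq_zero.1 h12 with h' | h'
      · exact absurd h' (by simp [Complex.ext_iff])
      · exact h'
    have hv1 : v 1 = 0 := by linear_combination e2 - hv2
    have hv0 : v 0 = 0 := by linear_combination e1 + hv2
    exact hv (funext fun i => by fin_cases i <;> simp [hv0, hv1, hv2])
  · -- not Kähler
    rintro ⟨J, -, -, hol⟩
    have h1 := hol ![1, 0, 0] (Pi.single 0 1)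
    have h2 := hol ![Complex.I, 0, 0] (Pi.single 0 1)
    have h3 := hol ![0, 1, 0] (Pi.single 0 1)
    have h4 := hol ![0, 1, 1] (Pi.single 0 1)
    rw [fd_phi, fd_phi] at h1 h2 h3 h4
    simp [Pi.single_apply] at h1 h2 h3 h4
    have hw2 : J (Pi.single 0 1) 2 = 0 := by
      have h12 : (1 + Complex.I) * J (Pi.single 0 1) 2 = 0 := by linear_combination h1 - h2
      rcases mul_eq_zero.1 h12 with h' | h'
      · exact absurd h' (by simp [Complex.ext_iff])
      · exact h'
    have hw1 : J (Pi.single 0 1) 1 = 0 := by linear_combination h1 - hw2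
    have hw0 : J (Pi.single 0 1) 0 = Complex.I := by linear_combination h3 + hw2
    rw [hw0, hw1, hw2] at h4
    simp [Complex.ext_iff] at h4
end
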